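/- Let d : ℝ × ℝ → [0,∞) be C² on ℝ² \ Δ with: (H1) d(x,y) > 0 for (x,y) ∉ Δ and d(x,x) = 0; (H2) symmetry; (H3) ∂₁∂₂ d ≥ 0 off the diagonal; (H4B) for every a < b, the limits lim_{λ→+∞} [d(b,λ) − d(a,λ)] and lim_{λ→−∞} [d(b,λ) − d(a,λ)] exist, are finite, and the former is at most the latter. Then d is a distance on ℝ. -/

import Mathlib

def IsDistance (d : ℝ → ℝ → ℝ) : Prop :=
  (∀ x y, 0 ≤ d x y) ∧ (∀ x y, d x y = 0 ↔ x = y) ∧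
  (∀ x y, d x y = d y x) ∧ (∀ x y z, d x z ≤ d x y + d y z)

open Filter in
theorem distance_of_H4B (d : ℝ → ℝ → ℝ)
    (hnonneg : ∀ x y, 0 ≤ d x y)
    (hC2 : ContDiffOn ℝ 2 (fun p : ℝ × ℝ => d p.1 p.2) {p : ℝ × ℝ | p.1 ≠ p.2})
    (h1 : ∀ x y : ℝ, x ≠ y → 0 < d x y) (h1' : ∀ x : ℝ, d x x = 0)
    (h2 : ∀ x y, d x y = d y x)
    (h3 : ∀ a b : ℝ, a ≠ b → 0 ≤ deriv (fun s => deriv (fun t => d s t) b) a)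
    (h4B : ∀ a b : ℝ, a < b → ∃ L M : ℝ,
      Tendsto (fun l => d b l - d a l) atTop (nhds L) ∧
      Tendsto (fun l => d b l - d a l) atBot (nhds M) ∧ L ≤ M) :
    IsDistance d := by
  classical
  open Set Topology in
  -- setup
  set F : ℝ × ℝ → ℝ := fun p => d p.1 p.2 with hF
  have hU : IsOpen {p : ℝ × ℝ | p.1 ≠ p.2} := isOpen_ne_fun continuous_fst continuous_snd
  have hDA : ∀ s t : ℝ, s ≠ t →
      HasDerivAt (fun u => d s u) ((fderiv ℝ F (s, t)) (0, 1)) t := by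
    intro s t hst
    have hmem : (s, t) ∈ {p : ℝ × ℝ | p.1 ≠ p.2} := hst
    have hdF : DifferentiableAt ℝ F (s, t) :=
      (hC2.differentiableOn (by norm_num)).differentiableAt (hU.mem_nhds hmem)
    have hline : HasDerivAt (fun u : ℝ => ((s, u) : ℝ × ℝ)) ((0 : ℝ), (1 : ℝ)) t :=
      (hasDerivAt_const t s).prodMk (hasDerivAt_id t)
    exact hdF.hasFDerivAt.comp_hasDerivAt t hline
  have hcont : ∀ s t : ℝ, s ≠ t → ContinuousAt (fun u => d s u) t :=
    fun s t h => (hDA s t h).differentiableAt.continuousAt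
  have hψ : ContDiffOn ℝ 1 (fun p : ℝ × ℝ => (fderiv ℝ F p) ((0 : ℝ), (1 : ℝ)))
      {p : ℝ × ℝ | p.1 ≠ p.2} :=
    (hC2.fderiv_of_isOpen hU (by norm_num)).clm_apply contDiffOn_const
  have hgdiff : ∀ l s : ℝ, s ≠ l →
      DifferentiableAt ℝ (fun s' => deriv (fun t => d s' t) l) s := by
    intro l s hsl
    have hmem : ((s, l) : ℝ × ℝ) ∈ {p : ℝ × ℝ | p.1 ≠ p.2} := hsl
    have hd1 : DifferentiableAt ℝ (fun p : ℝ × ℝ => (fderiv ℝ F p) ((0:ℝ),(1:ℝ))) (s, l) :=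
      (hψ.differentiableOn one_ne_zero).differentiableAt (hU.mem_nhds hmem)
    have hd2 : DifferentiableAt ℝ (fun s' : ℝ => (fderiv ℝ F (s', l)) ((0:ℝ),(1:ℝ))) s :=
      hd1.comp (f := fun s' : ℝ => ((s', l) : ℝ × ℝ)) s ((differentiableAt_id (𝕜 := ℝ) (x := s)).prodMk (differentiableAt_const l))
    apply hd2.congr_of_eventuallyEq
    filter_upwards [eventually_ne_nhds hsl] with s' hs'
    exact (hDA s' l hs').deriv
  have hD2mono : ∀ l a b : ℝ, a < b → l ∉ Icc a b →
      deriv (fun t => d a t) l ≤ deriv (fun t => d b t) l := by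
    intro l a b hab hl
    have hne : ∀ s ∈ Icc a b, s ≠ l := fun s hs h => hl (h ▸ hs)
    have hdiff : ∀ s ∈ Icc a b, DifferentiableAt ℝ (fun s' => deriv (fun t => d s' t) l) s :=
      fun s hs => hgdiff l s (hne s hs)
    have hmono : MonotoneOn (fun s' => deriv (fun t => d s' t) l) (Icc a b) := by
      apply monotoneOn_of_deriv_nonneg (convex_Icc a b)
      · exact fun s hs => (hdiff s hs).continuousAt.continuousWithinAt
      · exact fun s hs => (hdiff s (interior_subset hs)).differentiableWithinAt
      · exact fun s hs => h3 s l (hne s (interior_subset hs))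
    exact hmono (left_mem_Icc.2 hab.le) (right_mem_Icc.2 hab.le) hab.le
  have hfab : ∀ a b l : ℝ, l ≠ a → l ≠ b →
      HasDerivAt (fun l' => d b l' - d a l')
        (deriv (fun t => d b t) l - deriv (fun t => d a t) l) l := by
    intro a b l hla hlb
    have hb := hDA b l hlb.symm
    have ha := hDA a l hla.symm
    rw [hb.deriv, ha.deriv]
    exact hb.sub ha
  -- core monotonicity
  have core : ∀ a b : ℝ, a < b →
      MonotoneOn (fun l => d b l - d a l) (Iio a) ∧
      MonotoneOn (fun l => d b l - d a l) (Ioi b) := by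
    intro a b hab
    constructor
    · apply monotoneOn_of_deriv_nonneg (convex_Iio a)
      · intro l hl
        exact ((hfab a b l (ne_of_lt hl) (ne_of_lt (hl.trans hab))).differentiableAt.continuousAt).continuousWithinAt
      · intro l hl
        rw [interior_Iio] at hl
        exact (hfab a b l (ne_of_lt hl) (ne_of_lt (hl.trans hab))).differentiableAt.differentiableWithinAt
      · intro l hl
        rw [interior_Iio] at hl
        have h := hfab a b l (ne_of_lt hl) (ne_of_lt (hl.trans hab))
        rw [h.deriv]
        have := hD2mono l a b hab (fun hm => absurd hm.1 (not_le.2 hl))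
        linarith
    · apply monotoneOn_of_deriv_nonneg (convex_Ioi b)
      · intro l hl
        exact ((hfab a b l (ne_of_gt (hab.trans hl)) (ne_of_gt hl)).differentiableAt.continuousAt).continuousWithinAt
      · intro l hl
        rw [interior_Ioi] at hl
        exact (hfab a b l (ne_of_gt (hab.trans hl)) (ne_of_gt hl)).differentiableAt.differentiableWithinAt
      · intro l hl
        rw [interior_Ioi] at hl
        have h := hfab a b l (ne_of_gt (hab.trans hl)) (ne_of_gt hl)
        rw [h.deriv]
        have := hD2mono l a b hab (fun hm => absurd hm.2 (not_le.2 hl))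
        linarith
  -- three sorted-case triangle inequalities
  -- middle: x < y < z
  have keyM : ∀ x y z : ℝ, x < y → y < z → d x z ≤ d x y + d y z := by
    intro x y z hxy hyz
    obtain ⟨monoIio, -⟩ := core y z hyz
    have ht : Tendsto (fun l => d z l) (𝓝[<] y) (𝓝 (d z y)) :=
      ((hcont z y hyz.ne').continuousWithinAt).tendsto
    have hkey : d z x - d y x ≤ d z y := by
      refine ge_of_tendsto ht ?_
      filter_upwards [Ioo_mem_nhdsLT_of_mem (show y ∈ Ioc x y from ⟨hxy, le_rfl⟩)] with l hl
      have h1 : d z x - d y x ≤ d z l - d y l :=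
        monoIio (show x ∈ Iio y from hxy) (show l ∈ Iio y from hl.2) hl.1.le
      have h2 : 0 ≤ d y l := hnonneg y l
      linarith
    have e1 := h2 x z; have e2 := h2 x y; have e3 := h2 y z
    linarith [hkey]
  -- left: y < x < z
  have keyL : ∀ x y z : ℝ, y < x → x < z → d x z ≤ d x y + d y z := by
    intro x y z hyx hxz
    obtain ⟨monoIio, monoIoi⟩ := core y x hyx
    obtain ⟨L, M, hL, hM, hLM⟩ := h4B y x hyx
    have hub : d x z - d y z ≤ L := by
      refine ge_of_tendsto hL ?_
      filter_upwards [eventually_ge_atTop z] with l hl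
      exact monoIoi (show z ∈ Ioi x from hxz) (show l ∈ Ioi x from lt_of_lt_of_le hxz hl) hl
    have hlb : M ≤ d x y := by
      have ht : Tendsto (fun l => d x l) (𝓝[<] y) (𝓝 (d x y)) :=
        ((hcont x y hyx.ne').continuousWithinAt).tendsto
      refine ge_of_tendsto ht ?_
      filter_upwards [self_mem_nhdsWithin] with l (hl : l < y)
      have h1 : M ≤ d x l - d y l := by
        refine le_of_tendsto hM ?_
        filter_upwards [eventually_le_atBot l] with m hm
        exact monoIio (show m ∈ Iio y from lt_of_le_of_lt hm hl) (show l ∈ Iio y from hl) hm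
      have h2 : 0 ≤ d y l := hnonneg y l
      linarith
    have e1 := h2 x z; have e2 := h2 y z
    linarith
  -- right: x < z < y
  have keyR : ∀ x y z : ℝ, x < z → z < y → d x z ≤ d x y + d y z := by
    intro x y z hxz hzy
    obtain ⟨monoIio, monoIoi⟩ := core z y hzy
    obtain ⟨L, M, hL, hM, hLM⟩ := h4B z y hzy
    have hlb : M ≤ d y x - d z x := by
      refine le_of_tendsto hM ?_
      filter_upwards [eventually_le_atBot x] with m hm
      exact monoIio (show m ∈ Iio z from lt_of_le_of_lt hm hxz) (show x ∈ Iio z from hxz) hm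
    have hub : -(d z y) ≤ L := by
      have ht : Tendsto (fun l => -(d z l)) (𝓝[>] y) (𝓝 (-(d z y))) :=
        (((hcont z y hzy.ne).continuousWithinAt).tendsto).neg
      refine le_of_tendsto ht ?_
      filter_upwards [self_mem_nhdsWithin] with l (hl : y < l)
      have h1 : d y l - d z l ≤ L := by
        refine ge_of_tendsto hL ?_
        filter_upwards [eventually_ge_atTop l] with m hm
        exact monoIoi (show l ∈ Ioi y from hl) (show m ∈ Ioi y from lt_of_lt_of_le hl hm) hm
      have h2 : 0 ≤ d y l := hnonneg y l
      linarith
    have e1 := h2 x z; have e2 := h2 x y; have e3 := h2 y z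
    linarith
  -- assemble
  refine ⟨hnonneg, ?_, h2, ?_⟩
  · intro x y
    constructor
    · intro h
      by_contra hne
      exact absurd h (ne_of_gt (h1 x y hne))
    · rintro rfl; exact h1' x
  · intro x y z
    rcases eq_or_ne x y with rfl | hxy
    · rw [h1']; linarith [hnonneg x z]
    rcases eq_or_ne y z with rfl | hyz
    · rw [h1']; linarith [hnonneg x y]
    rcases eq_or_ne x z with rfl | hxz
    · rw [h1']; linarith [hnonneg x y, hnonneg y x]
    rcases lt_or_gt_of_ne hxy with h₁ | h₁ <;> rcases lt_or_gt_of_ne hyz with h₂ | h₂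
    · exact keyM x y z h₁ h₂
    · -- x < y, z < y
      rcases lt_or_gt_of_ne hxz with h₃ | h₃
      · exact keyR x y z h₃ h₂
      · -- z < x < y : use keyR on (z, y, x)
        have := keyR z y x h₃ h₁
        rw [h2 z x] at this; rw [h2 y z, h2 x y]; linarith
    · -- y < x, y < z
      rcases lt_or_gt_of_ne hxz with h₃ | h₃
      · exact keyL x y z h₁ h₃
      · -- y < z < x : keyL on (z, y, x)
        have := keyL z y x h₂ h₃
        rw [h2 z x] at this; rw [h2 y z, h2 x y]; linarith
    · -- z < y < x : keyM on (z, y, x)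
      have := keyM z y x h₂ h₁
      rw [h2 z x] at this; rw [h2 y z, h2 x y]; linarith
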